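/- For a real quota q > 2, the Euler characteristic of the LogPrime quota complex satisfies χ(LogPrime(q)) = −∑_{2 ≤ n < e^q} μ(n). Combinatorially: ∑_{j≥0} (−1)^j c_j = −∑_{2 ≤ n < e^q} μ(n), where c_j is the number of (j+1)-element sets S of primes with ∑_{p∈S} ln(p) < q. -/

import Mathlib

open ArithmeticFunction
open scoped ArithmeticFunction.Moebius

lemma squarefree_prod_primes' {s : Finset ℕ} (hs : ∀ p ∈ s, p.Prime) :
    Squarefree (∏ p ∈ s, p) := by
  classical
  induction s using Finset.induction_on with
  | empty => simpa using squarefree_one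
  | @insert a s ha ih =>
    rw [Finset.prod_insert ha]
    have hap := hs a (Finset.mem_insert_self _ _)
    have hrest : ∀ p ∈ s, p.Prime := fun p hp => hs p (Finset.mem_insert_of_mem hp)
    have hcop : Nat.Coprime a (∏ p ∈ s, p) :=
      Nat.Coprime.prod_right fun q hq =>
        (Nat.coprime_primes hap (hrest q hq)).mpr (by rintro rfl; exact ha hq)
    exact (Nat.squarefree_mul hcop).mpr ⟨hap.squarefree, ih hrest⟩

lemma moebius_squarefree_eq' {n : ℕ} (hn : Squarefree n) :
    μ n = (-1 : ℤ) ^ n.primeFactors.card := by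
  rw [moebius_apply_of_squarefree hn]
  congr 1
  rw [cardFactors_apply, Nat.primeFactors,
    List.toFinset_card_of_nodup (Nat.squarefree_iff_nodup_primeFactorsList hn.ne_zero |>.mp hn)]

lemma log_prod_primes' {s : Finset ℕ} (hs : ∀ p ∈ s, p.Prime) :
    Real.log (∏ p ∈ s, p : ℕ) = ∑ p ∈ s, Real.log p := by
  push_cast
  exact Real.log_prod fun p hp => by exact_mod_cast (hs p hp).pos.ne'

theorem euler_char_logprime_complex (q : ℝ) (hq : 2 < q)
    (c : ℕ → ℕ)
    (hc : ∀ j, c j = {S : Finset ℕ | S.card = j + 1 ∧ (∀ p ∈ S, p.Prime) ∧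
      (∑ p ∈ S, Real.log p) < q}.ncard) :
    (Function.support fun j : ℕ => ((-1 : ℤ) ^ j * c j)).Finite ∧
    (Function.support fun n : ℕ =>
      if 2 ≤ n ∧ (n : ℝ) < Real.exp q then μ n else 0).Finite ∧
    (∑ᶠ j : ℕ, (-1 : ℤ) ^ j * c j) =
      - ∑ᶠ n : ℕ, (if 2 ≤ n ∧ (n : ℝ) < Real.exp q then μ n else 0) := by
  classical
  have hlog2 : 0 < Real.log 2 := Real.log_pos one_lt_two
  set N := ⌈Real.exp q⌉₊ with hNdef
  set J := ⌈q / Real.log 2⌉₊ with hJdef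
  set P : Finset ℕ → Prop := fun S => (∀ p ∈ S, p.Prime) ∧ (∑ p ∈ S, Real.log p) < q with hP
  -- any good set is contained in `range N`
  have hsub : ∀ S : Finset ℕ, P S → S ⊆ Finset.range N := by
    intro S hS p hp
    have hp' := hS.1 p hp
    have h1 : ∀ r ∈ S, 0 ≤ Real.log r := fun r hr =>
      Real.log_nonneg (by exact_mod_cast (hS.1 r hr).one_lt.le)
    have h2 : Real.log p ≤ ∑ r ∈ S, Real.log r := Finset.single_le_sum h1 hp
    have hppos : (0:ℝ) < p := by exact_mod_cast hp'.pos
    have h3 : (p:ℝ) < Real.exp q := (Real.log_lt_iff_lt_exp hppos).mp (lt_of_le_of_lt h2 hS.2)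
    exact Finset.mem_range.mpr (Nat.lt_ceil.mpr h3)
  -- any good set has small cardinality
  have hcardlt : ∀ S : Finset ℕ, P S → S.card < J := by
    intro S hS
    have h1 : ∀ r ∈ S, Real.log 2 ≤ Real.log r := fun r hr =>
      Real.log_le_log (by norm_num) (by exact_mod_cast (hS.1 r hr).two_le)
    have h2 : (S.card : ℝ) * Real.log 2 ≤ ∑ r ∈ S, Real.log r := by
      have := Finset.card_nsmul_le_sum S (fun r => Real.log r) (Real.log 2) h1
      rwa [nsmul_eq_mul] at this
    have h3 : (S.card : ℝ) < q / Real.log 2 :=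
      (lt_div_iff₀ hlog2).mpr (lt_of_le_of_lt h2 hS.2)
    exact Nat.lt_ceil.mpr h3
  -- identify `c j` with the cardinality of a concrete finset
  have hcj : ∀ j, c j =
      ((Finset.range N).powerset.filter (fun S => S.card = j + 1 ∧ P S)).card := by
    intro j
    rw [hc j]
    have hset : {S : Finset ℕ | S.card = j + 1 ∧ (∀ p ∈ S, p.Prime) ∧
        (∑ p ∈ S, Real.log p) < q} =
        ↑((Finset.range N).powerset.filter (fun S => S.card = j + 1 ∧ P S)) := by
      ext S
      simp only [Set.mem_setOf_eq, Finset.coe_filter, Finset.mem_powerset]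
      constructor
      · rintro ⟨h1, h2, h3⟩; exact ⟨hsub S ⟨h2, h3⟩, h1, h2, h3⟩
      · rintro ⟨_, h1, h2, h3⟩; exact ⟨h1, h2, h3⟩
    rw [hset, Set.ncard_coe_finset]
  -- first support is contained in `range J`
  have hsupp1 : (Function.support fun j : ℕ => ((-1 : ℤ) ^ j * c j)) ⊆
      ↑(Finset.range J) := by
    intro j hj
    have hcne : c j ≠ 0 := by
      intro h0
      apply hj
      simp [h0]
    rw [hcj j] at hcne
    obtain ⟨S, hS⟩ := Finset.card_ne_zero.mp hcne
    simp only [Finset.mem_filter, Finset.mem_powerset] at hS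
    have := hcardlt S hS.2.2
    have : j + 1 < J := hS.2.1 ▸ this
    exact Finset.mem_coe.mpr (Finset.mem_range.mpr (Nat.lt_of_succ_lt this))
  -- second support is contained in `range N`
  have hsupp2 : (Function.support fun n : ℕ =>
      if 2 ≤ n ∧ (n : ℝ) < Real.exp q then μ n else 0) ⊆ ↑(Finset.range N) := by
    intro n hn
    have : 2 ≤ n ∧ (n : ℝ) < Real.exp q := by
      by_contra h
      apply hn
      simp [h]
    exact Finset.mem_coe.mpr (Finset.mem_range.mpr (Nat.lt_ceil.mpr this.2))
  refine ⟨(Finset.range J).finite_toSet.subset hsupp1,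
    (Finset.range N).finite_toSet.subset hsupp2, ?_⟩
  rw [finsum_eq_sum_of_support_subset _ hsupp1, finsum_eq_sum_of_support_subset _ hsupp2]
  -- set of all good nonempty sets
  set A : Finset (Finset ℕ) :=
    (Finset.range N).powerset.filter (fun S => S.Nonempty ∧ P S) with hA
  -- set of good squarefree numbers
  set F : Finset ℕ :=
    (Finset.range N).filter (fun n => (2 ≤ n ∧ (n : ℝ) < Real.exp q) ∧ Squarefree n) with hF
  -- Step 1 : LHS = ∑_{S ∈ A} (-1)^(card S + 1)
  have step1 : (∑ j ∈ Finset.range J, (-1 : ℤ) ^ j * c j) =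
      ∑ S ∈ A, (-1 : ℤ) ^ (S.card + 1) := by
    have hmaps : ∀ S ∈ A, S.card - 1 ∈ Finset.range J := by
      intro S hS
      simp only [hA, Finset.mem_filter, Finset.mem_powerset] at hS
      exact Finset.mem_range.mpr (lt_of_le_of_lt (Nat.sub_le _ _) (hcardlt S hS.2.2))
    rw [← Finset.sum_fiberwise_of_maps_to hmaps (fun S => (-1 : ℤ) ^ (S.card + 1))]
    refine Finset.sum_congr rfl fun j _ => ?_
    have hfe : A.filter (fun S => S.card - 1 = j) =
        (Finset.range N).powerset.filter (fun S => S.card = j + 1 ∧ P S) := by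
      rw [hA, Finset.filter_filter]
      refine Finset.filter_congr fun S _ => ?_
      constructor
      · rintro ⟨⟨hne, hPS⟩, hcard⟩
        refine ⟨?_, hPS⟩
        have h1 : 1 ≤ S.card := Finset.card_pos.mpr hne
        omega
      · rintro ⟨hcard, hPS⟩
        exact ⟨⟨Finset.card_pos.mp (by omega), hPS⟩, by omega⟩
    rw [hfe, hcj j]
    have hconst : ∀ S ∈ (Finset.range N).powerset.filter (fun S => S.card = j + 1 ∧ P S),
        (-1 : ℤ) ^ (S.card + 1) = (-1 : ℤ) ^ j := by
      intro S hS
      simp only [Finset.mem_filter] at hS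
      rw [hS.2.1]; ring
    rw [Finset.sum_congr rfl hconst, Finset.sum_const, nsmul_eq_mul, mul_comm]
  -- Step 2 : ∑_{S ∈ A} (-1)^(card S + 1) = ∑_{n ∈ F} (-(μ n))
  have step2 : (∑ S ∈ A, (-1 : ℤ) ^ (S.card + 1)) = ∑ n ∈ F, (-(μ n) : ℤ) := by
    refine Finset.sum_nbij' (fun S => ∏ p ∈ S, p) (fun n => n.primeFactors) ?_ ?_ ?_ ?_ ?_
    · -- maps: A → F
      intro S hS
      simp only [hA, Finset.mem_filter, Finset.mem_powerset] at hS
      obtain ⟨-, hne, hpr, hsum⟩ := hS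
      have hsq : Squarefree (∏ p ∈ S, p) := squarefree_prod_primes' hpr
      have h2le : 2 ≤ ∏ p ∈ S, p := by
        obtain ⟨p, hp⟩ := hne
        exact le_trans (hpr p hp).two_le
          (Finset.single_le_prod' (fun r hr => (hpr r hr).one_lt.le) hp)
      have hpos : (0:ℝ) < ((∏ p ∈ S, p : ℕ) : ℝ) := by
        exact_mod_cast lt_of_lt_of_le (by norm_num) h2le
      have hlt : ((∏ p ∈ S, p : ℕ) : ℝ) < Real.exp q := by
        rw [← Real.log_lt_iff_lt_exp hpos, log_prod_primes' hpr]
        exact hsum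
      simp only [hF, Finset.mem_filter, Finset.mem_range]
      exact ⟨Nat.lt_ceil.mpr hlt, ⟨h2le, hlt⟩, hsq⟩
    · -- maps: F → A
      intro n hn
      simp only [hF, Finset.mem_filter, Finset.mem_range] at hn
      obtain ⟨-, ⟨h2, hlt⟩, hsq⟩ := hn
      have hpr : ∀ p ∈ n.primeFactors, p.Prime := fun p hp =>
        Nat.prime_of_mem_primeFactors hp
      have hpos : (0:ℝ) < (n:ℝ) := by exact_mod_cast lt_of_lt_of_le (by norm_num) h2
      have hsum : (∑ p ∈ n.primeFactors, Real.log p) < q := by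
        rw [← log_prod_primes' hpr, Nat.prod_primeFactors_of_squarefree hsq]
        exact (Real.log_lt_iff_lt_exp hpos).mpr hlt
      have hPn : P n.primeFactors := ⟨hpr, hsum⟩
      simp only [hA, Finset.mem_filter, Finset.mem_powerset]
      exact ⟨hsub _ hPn, Nat.nonempty_primeFactors.mpr (by omega), hPn⟩
    · -- left inverse
      intro S hS
      simp only [hA, Finset.mem_filter, Finset.mem_powerset] at hS
      exact Nat.primeFactors_prod hS.2.2.1
    · -- right inverse
      intro n hn
      simp only [hF, Finset.mem_filter] at hn
      exact Nat.prod_primeFactors_of_squarefree hn.2.2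
    · -- values agree
      intro S hS
      simp only [hA, Finset.mem_filter, Finset.mem_powerset] at hS
      have hsq : Squarefree (∏ p ∈ S, p) := squarefree_prod_primes' hS.2.2.1
      rw [moebius_squarefree_eq' hsq, Nat.primeFactors_prod hS.2.2.1]
      ring
  -- Step 3 : RHS sum equals ∑_{n ∈ F} μ n
  have step3 : (∑ n ∈ Finset.range N,
      (if 2 ≤ n ∧ (n : ℝ) < Real.exp q then (μ n : ℤ) else 0)) = ∑ n ∈ F, (μ n : ℤ) := by
    rw [← Finset.sum_filter]
    symm
    refine Finset.sum_subset ?_ ?_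
    · intro n hn
      simp only [hF, Finset.mem_filter] at hn ⊢
      exact ⟨hn.1, hn.2.1⟩
    · intro n hn1 hn2
      simp only [hF, Finset.mem_filter] at hn1 hn2
      have : ¬ Squarefree n := by tauto
      exact moebius_eq_zero_of_not_squarefree this
  rw [step1, step2, step3, Finset.sum_neg_distrib]
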